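/- Let G be a connected, irreducible (bull, C4)-free graph that contains an amalgam partition (K, A1, B1, A2, B2) with A2 a clique of size at least 2. Then this situation leads to a contradiction: G must contain an induced bull or a pair of true twins. -/

import Mathlib

open SimpleGraph

variable {V : Type*}

/-- The bull: a triangle 0,1,2 with pendant vertices 3 (adjacent to 0) and 4 (adjacent to 1). -/
def bullGraph : SimpleGraph (Fin 5) :=
  SimpleGraph.fromRel (fun i j =>
    (i = 0 ∧ j = 1) ∨ (i = 0 ∧ j = 2) ∨ (i = 1 ∧ j = 2) ∨ (i = 0 ∧ j = 3) ∨ (i = 1 ∧ j = 4))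

/-- The graph consisting of two independent edges: 0-1 and 2-3. -/
def twoK2 : SimpleGraph (Fin 4) :=
  SimpleGraph.fromRel (fun i j => (i = 0 ∧ j = 1) ∨ (i = 2 ∧ j = 3))

/-- `G` has no induced subgraph isomorphic to `H`. -/
def IndFree {W : Type*} (H : SimpleGraph W) (G : SimpleGraph V) : Prop :=
  IsEmpty (H ↪g G)

/-- A graph is chordal if it has no induced cycle of length at least 4. -/
def Chordal (G : SimpleGraph V) : Prop :=
  ∀ n : ℕ, 4 ≤ n → IndFree (cycleGraph n) G

/-- A cap on a hole of length `n`: a cycle on `ZMod n` together with an extra vertex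
adjacent to exactly the two adjacent hole vertices `0` and `1`. -/
def capGraph (n : ℕ) : SimpleGraph (Option (ZMod n)) :=
  SimpleGraph.fromRel (fun a b =>
    match a, b with
    | some i, some j => j = i + 1
    | none, some i => i = 0 ∨ i = 1
    | _, _ => False)

/-- `x` dominates `y`: they are adjacent and every neighbour of `y` other than `x`
is a neighbour of `x`. -/
def Dominates (G : SimpleGraph V) (x y : V) : Prop :=
  G.Adj x y ∧ ∀ z, G.Adj y z → z ≠ x → G.Adj x z

/-- A graph is reducible if some vertex dominates an adjacent vertex. -/
def Reducible (G : SimpleGraph V) : Prop :=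
  ∃ x y, Dominates G x y

/-- Two adjacent vertices with the same neighbours other than each other. -/
def TrueTwins (G : SimpleGraph V) (x y : V) : Prop :=
  G.Adj x y ∧ ∀ z, z ≠ x → z ≠ y → (G.Adj x z ↔ G.Adj y z)

/-- A vertex is simplicial if its neighbourhood induces a clique. -/
def Simplicial (G : SimpleGraph V) (v : V) : Prop :=
  G.IsClique (G.neighborSet v)

/-- A universal vertex is adjacent to all other vertices. -/
def Universal (G : SimpleGraph V) (v : V) : Prop :=
  ∀ w, w ≠ v → G.Adj v w

/-- A graph is biconnected if it is connected and remains connected after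
deleting any single vertex. -/
def Biconnected (G : SimpleGraph V) : Prop :=
  G.Connected ∧ ∀ v : V, (G.induce ({v}ᶜ : Set V)).Connected

/-- A basic (cap-free) graph: a chordal graph, or a biconnected triangle-free graph
together with at most one additional vertex adjacent to all other vertices. -/
def IsBasic (G : SimpleGraph V) : Prop :=
  Chordal G ∨ (Biconnected G ∧ G.CliqueFree 3) ∨
    (∃ v : V, Universal G v ∧ Biconnected (G.induce ({v}ᶜ : Set V)) ∧
      (G.induce ({v}ᶜ : Set V)).CliqueFree 3)

/-- A one-point cutset: a vertex whose removal disconnects the graph. -/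
def IsCutVertex (G : SimpleGraph V) (v : V) : Prop :=
  ¬ (G.induce ({v}ᶜ : Set V)).Connected

/-- `C` is (the vertex set of) a connected component of `G - v`. -/
def IsComponentOf (G : SimpleGraph V) (v : V) (C : Set V) : Prop :=
  v ∉ C ∧ C.Nonempty ∧ (G.induce C).Connected ∧
    ∀ x ∈ C, ∀ y, G.Adj x y → y ≠ v → y ∈ C

/-- An amalgam partition `(K, A1, B1, A2, B2)` of `G`. -/
structure IsAmalgamPartition (G : SimpleGraph V) (K A1 B1 A2 B2 : Set V) : Prop where
  partition : ∀ v : V, (v ∈ K ∧ v ∉ A1 ∧ v ∉ B1 ∧ v ∉ A2 ∧ v ∉ B2) ∨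
    (v ∉ K ∧ v ∈ A1 ∧ v ∉ B1 ∧ v ∉ A2 ∧ v ∉ B2) ∨
    (v ∉ K ∧ v ∉ A1 ∧ v ∈ B1 ∧ v ∉ A2 ∧ v ∉ B2) ∨
    (v ∉ K ∧ v ∉ A1 ∧ v ∉ B1 ∧ v ∈ A2 ∧ v ∉ B2) ∨
    (v ∉ K ∧ v ∉ A1 ∧ v ∉ B1 ∧ v ∉ A2 ∧ v ∈ B2)
  A1_nonempty : A1.Nonempty
  A2_nonempty : A2.Nonempty
  K_clique : G.IsClique K
  side1_big : 2 ≤ (A1 ∪ B1).ncard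
  side2_big : 2 ≤ (A2 ∪ B2).ncard
  A1A2_complete : ∀ a1 ∈ A1, ∀ a2 ∈ A2, G.Adj a1 a2
  KA1_complete : ∀ k ∈ K, ∀ a ∈ A1, G.Adj k a
  KA2_complete : ∀ k ∈ K, ∀ a ∈ A2, G.Adj k a
  B1_sep : ∀ b ∈ B1, ∀ x ∈ A2 ∪ B2, ¬ G.Adj b x
  B2_sep : ∀ b ∈ B2, ∀ x ∈ A1 ∪ B1, ¬ G.Adj b x

/-- A clique cover of `G`: a finite family of cliques covering all vertices. -/
def IsCliqueCover (G : SimpleGraph V) (𝒞 : Finset (Set V)) : Prop :=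
  (∀ s ∈ 𝒞, G.IsClique s) ∧ ∀ v : V, ∃ s ∈ 𝒞, v ∈ s

/-- The clique cover number `θ(G)`. -/
noncomputable def cliqueCoverNumber (G : SimpleGraph V) : ℕ :=
  sInf {n : ℕ | ∃ 𝒞 : Finset (Set V), IsCliqueCover G 𝒞 ∧ 𝒞.card = n}

/-- A matching of `G`: a finite set of edges, pairwise vertex-disjoint. -/
def IsMatching' (G : SimpleGraph V) (M : Finset (Sym2 V)) : Prop :=
  (↑M : Set (Sym2 V)) ⊆ G.edgeSet ∧
    ∀ e ∈ M, ∀ f ∈ M, e ≠ f → ∀ v : V, v ∈ e → v ∉ f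

/-- The maximum size `m(G)` of a matching of `G`. -/
noncomputable def matchingNumber (G : SimpleGraph V) : ℕ :=
  sSup {n : ℕ | ∃ M : Finset (Sym2 V), IsMatching' G M ∧ M.card = n}

/-- An asteroidal triple: a stable triple such that between any two of its vertices
there is a path avoiding the closed neighbourhood of the third. -/
def IsAT (G : SimpleGraph V) (x y z : V) : Prop :=
  x ≠ y ∧ y ≠ z ∧ x ≠ z ∧ ¬ G.Adj x y ∧ ¬ G.Adj y z ∧ ¬ G.Adj x z ∧
    (∃ p : G.Walk x y, ∀ w ∈ p.support, w ≠ z ∧ ¬ G.Adj z w) ∧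
    (∃ p : G.Walk y z, ∀ w ∈ p.support, w ≠ x ∧ ¬ G.Adj x w) ∧
    (∃ p : G.Walk x z, ∀ w ∈ p.support, w ≠ y ∧ ¬ G.Adj y w)

def ATFree (G : SimpleGraph V) : Prop := ¬ ∃ x y z : V, IsAT G x y z

private lemma c4_aux (G : SimpleGraph V) (a a' z w : V)
    (hne : a ≠ a') (hza : z ≠ a) (hza' : z ≠ a') (hwa : w ≠ a) (hwa' : w ≠ a') (hzw : z ≠ w)
    (e1 : G.Adj a a') (e2 : G.Adj a' z) (e3 : G.Adj z w) (e4 : G.Adj w a)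
    (n1 : ¬ G.Adj a z) (n2 : ¬ G.Adj a' w)
    (hc : IndFree (SimpleGraph.cycleGraph 4) G) : False := by
  apply hc.false
  refine ⟨⟨![a, a', z, w], ?_⟩, ?_⟩
  · intro i j hij
    fin_cases i <;> fin_cases j <;> simp_all [hne.symm, hza.symm, hza'.symm, hwa.symm,
      hwa'.symm, hzw.symm]
  · intro i j
    change G.Adj (![a, a', z, w] i) (![a, a', z, w] j) ↔ _
    have e1' := e1.symm; have e2' := e2.symm; have e3' := e3.symm; have e4' := e4.symm
    have n1' : ¬ G.Adj z a := fun h => n1 h.symm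
    have n2' : ¬ G.Adj w a' := fun h => n2 h.symm
    fin_cases i <;> fin_cases j <;>
      simp_all [show (4:ℕ) = 2 + 2 from rfl, SimpleGraph.cycleGraph_adj] <;> decide

private lemma bull_aux (G : SimpleGraph V) (a a' a1 w z : V)
    (hne : a ≠ a') (h1a : a1 ≠ a) (h1a' : a1 ≠ a') (h1z : a1 ≠ z) (h1w : a1 ≠ w)
    (hza : z ≠ a) (hza' : z ≠ a') (hwa : w ≠ a) (hwa' : w ≠ a') (hzw : z ≠ w)
    (e1 : G.Adj a a') (e2 : G.Adj a1 a) (e3 : G.Adj a1 a') (e4 : G.Adj a w) (e5 : G.Adj a' z)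
    (n1 : ¬ G.Adj a z) (n2 : ¬ G.Adj a' w) (n3 : ¬ G.Adj a1 z) (n4 : ¬ G.Adj a1 w)
    (n5 : ¬ G.Adj z w) (hb : IndFree bullGraph G) : False := by
  apply hb.false
  refine ⟨⟨![a, a', a1, w, z], ?_⟩, ?_⟩
  · intro i j hij
    fin_cases i <;> fin_cases j <;> simp_all [hne.symm, h1a.symm, h1a'.symm, h1z.symm, h1w.symm,
      hza.symm, hza'.symm, hwa.symm, hwa'.symm, hzw.symm]
  · intro i j
    change G.Adj (![a, a', a1, w, z] i) (![a, a', a1, w, z] j) ↔ _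
    have e1' := e1.symm; have e2' := e2.symm; have e3' := e3.symm
    have e4' := e4.symm; have e5' := e5.symm
    have n1' : ¬ G.Adj z a := fun h => n1 h.symm
    have n2' : ¬ G.Adj w a' := fun h => n2 h.symm
    have n3' : ¬ G.Adj z a1 := fun h => n3 h.symm
    have n4' : ¬ G.Adj w a1 := fun h => n4 h.symm
    have n5' : ¬ G.Adj w z := fun h => n5 h.symm
    fin_cases i <;> fin_cases j <;>
      simp_all [bullGraph, SimpleGraph.fromRel_adj] <;> omega

/-- a connected, irreducible (bull, C4)-free graph cannot have an amalgam
partition in which `A2` is a clique of size at least 2 (this would force an induced bull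
or a pair of true twins, a contradiction). -/
theorem stmt5 (G : SimpleGraph V) (hconn : G.Connected) (hirr : ¬ Reducible G)
    (hb : IndFree bullGraph G) (hc : IndFree (SimpleGraph.cycleGraph 4) G)
    {K A1 B1 A2 B2 : Set V} (hA : IsAmalgamPartition G K A1 B1 A2 B2)
    (hA2 : G.IsClique A2) (h2 : 2 ≤ A2.ncard) : False := by
  classical
  have hfin : A2.Finite := Set.finite_of_ncard_ne_zero (by omega)
  obtain ⟨a, ha, a', ha', hne⟩ := (Set.one_lt_ncard hfin).mp (by omega)
  have e1 : G.Adj a a' := hA2 ha ha' hne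
  -- a neighbour of one vertex of A2 that misses another vertex of A2 lies in B2
  have hclass : ∀ u ∈ A2, ∀ v ∈ A2, ∀ x, G.Adj v x → x ≠ u → ¬ G.Adj u x → x ∈ B2 := by
    intro u hu v hv x hvx hxu hux
    rcases hA.partition x with h | h | h | h | h
    · exact absurd ((hA.KA2_complete x h.1 u hu)) (fun hh => hux hh.symm)
    · exact absurd ((hA.A1A2_complete x h.2.1 u hu)) (fun hh => hux hh.symm)
    · exact absurd hvx.symm (hA.B1_sep x h.2.2.1 v (Or.inl hv))
    · exact absurd (hA2 hu h.2.2.2.1 (Ne.symm hxu)) hux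
    · exact h.2.2.2.2
  have hndom : ∀ u v : V, ¬ Dominates G u v := by
    intro u v h; exact hirr ⟨u, v, h⟩
  -- a does not dominate a' : get z
  obtain ⟨z, hz1, hz2, hz3⟩ : ∃ z, G.Adj a' z ∧ z ≠ a ∧ ¬ G.Adj a z := by
    have := hndom a a'
    rw [Dominates] at this
    push_neg at this
    exact this e1
  -- a' does not dominate a : get w
  obtain ⟨w, hw1, hw2, hw3⟩ : ∃ w, G.Adj a w ∧ w ≠ a' ∧ ¬ G.Adj a' w := by
    have := hndom a' a
    rw [Dominates] at this
    push_neg at this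
    exact this e1.symm
  have hza' : z ≠ a' := fun h => G.irrefl (h ▸ hz1)
  have hwa : w ≠ a := fun h => G.irrefl (h ▸ hw1)
  have hzB2 : z ∈ B2 := hclass a ha a' ha' z hz1 hz2 hz3
  have hwB2 : w ∈ B2 := hclass a' ha' a ha w hw1 hw2 hw3
  have hzw : z ≠ w := fun h => hw3 (h ▸ hz1)
  -- pick a1 ∈ A1
  obtain ⟨a1, ha1⟩ := hA.A1_nonempty
  have e2 : G.Adj a1 a := (hA.A1A2_complete a1 ha1 a ha)
  have e3 : G.Adj a1 a' := (hA.A1A2_complete a1 ha1 a' ha')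
  have n3 : ¬ G.Adj a1 z := fun h => hA.B2_sep z hzB2 a1 (Or.inl ha1) h.symm
  have n4 : ¬ G.Adj a1 w := fun h => hA.B2_sep w hwB2 a1 (Or.inl ha1) h.symm
  have h1a : a1 ≠ a := G.ne_of_adj e2
  have h1a' : a1 ≠ a' := G.ne_of_adj e3
  have h1z : a1 ≠ z := by
    rintro rfl
    rcases hA.partition a1 with h | h | h | h | h <;> first
      | exact h.2.1 ha1 | exact h.2.2.2.2 hzB2 | exact (h.2.2.2.1 : a1 ∉ B2) hzB2
      | exact absurd ha1 h.2.2.2.2.elim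
  have h1w : a1 ≠ w := by
    rintro rfl
    rcases hA.partition a1 with h | h | h | h | h <;> first
      | exact h.2.1 ha1 | exact h.2.2.2.2 hwB2 | exact (h.2.2.2.1 : a1 ∉ B2) hwB2
      | exact absurd ha1 h.2.2.2.2.elim
  by_cases hadjzw : G.Adj z w
  · exact c4_aux G a a' z w hne hz2 hza' hwa hw2 hzw e1 hz1 hadjzw hw1.symm hz3 hw3 hc
  · exact bull_aux G a a' a1 w z hne h1a h1a' h1z h1w hz2 hza' hwa hw2 hzw
      e1 e2 e3 hw1 hz1 hz3 hw3 n3 n4 hadjzw hb
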